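/- Let H = G ⊠ K_2 with vertical arcs of spin ε weighted x_ε, straight a-arcs weighted w_a, and diagonal a-arcs weighted w'_a. Then the forest enumerator satisfies F_H(t; x_0, x_1) = F_H(t; x_0 + x_1, 0). -/

import Mathlib

open scoped Classical
open Polynomial

noncomputable section

/-- A rooted (spanning) forest of the digraph with arc relation `A`:
every vertex has at most one outgoing arc (encoded by `f : V → Option V`),
all arcs of the forest are arcs of the digraph, and there is no directed cycle. -/
def IsRootedForest {V : Type*} (A : V → V → Prop) (f : V → Option V) : Prop :=
  (∀ v w : V, f v = some w → A v w) ∧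
  ∀ v : V, ¬ Relation.TransGen (fun a b : V => f a = some b) v v

/-- The number of components (= roots) of a rooted forest. -/
def numRoots {V : Type*} [Fintype V] (f : V → Option V) : ℕ :=
  (Finset.univ.filter fun v => f v = none).card

/-- The rooted-forest enumerator of a weighted digraph:
`∑_F t^(#components of F) ∏_{arcs (v,w) ∈ F} wgt v w`. -/
def forestEnum {V : Type*} [Fintype V] {R : Type*} [CommRing R]
    (A : V → V → Prop) (wgt : V → V → R) (t : R) : R :=
  ∑ f ∈ Finset.univ.filter (fun f : V → Option V => IsRootedForest A f),
    ∏ v : V, (f v).elim t (wgt v)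

/-- Arc relation of the `n`-dimensional hypercube on `{0,1}^n`:
an arc from `u` to `v` flips exactly one coordinate. -/
def cubeArc (n : ℕ) (u v : Fin n → Bool) : Prop :=
  ∃ i : Fin n, v = Function.update u i (!(u i))

/-- Weight of a hypercube arc: an arc of direction `i` and spin `ε`
(i.e. flipping coordinate `i` to the value `ε`) has weight `x i ε`. -/
def cubeWeight {R : Type*} [CommRing R] (n : ℕ) (x : Fin n → Bool → R)
    (u v : Fin n → Bool) : R :=
  ∑ i : Fin n, if v = Function.update u i (!(u i)) then x i (v i) else 0

end

/-- Arc relation of the strong product `G ⊠ K₂` of a loopless digraph with arc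
relation `A`: straight and diagonal arcs over the arcs of `G`, plus vertical arcs. -/
def strongArc {U : Type*} (A : U → U → Prop) (p q : U × Bool) : Prop :=
  A p.1 q.1 ∨ (p.1 = q.1 ∧ p.2 ≠ q.2)

/-- Weights on `G ⊠ K₂`: vertical arcs of spin `ε` weigh `x_ε` (the spin of a
vertical arc is the second coordinate of its target), straight `a`-arcs weigh
`w a`, diagonal `a`-arcs weigh `w' a`. -/
noncomputable def strongWeight {R : Type*} [CommRing R] {U : Type*}
    (w w' : U → U → R) (x0 x1 : R) (p q : U × Bool) : R :=
  if p.1 = q.1 then (if p.2 = q.2 then 0 else (if q.2 then x1 else x0))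
  else (if p.2 = q.2 then w p.1 q.1 else w' p.1 q.1)

namespace SpinAux

open Finset Matrix

variable {R : Type*} [CommRing R] {V : Type*} [Fintype V] [DecidableEq V]

def fwd (f : V → Option V) : V → V → Prop := fun a b => f a = some b

noncomputable def stepMat (f : V → Option V) : Matrix V V R :=
  Matrix.of fun p q => if f p = some q then 1 else 0

def fIter (f : V → Option V) : ℕ → V → Option V
  | 0, v => some v
  | k + 1, v => (fIter f k v).bind f

lemma fIter_add (f : V → Option V) (a b : ℕ) (v : V) :
    fIter f (a + b) v = (fIter f a v).bind (fIter f b) := by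
  induction b with
  | zero => cases h : fIter f a v <;> simp [fIter, h]
  | succ b ih =>
    show fIter f ((a + b) + 1) v = _
    rw [show fIter f ((a+b)+1) v = (fIter f (a+b) v).bind f from rfl, ih]
    cases h : fIter f a v with
    | none => rfl
    | some u => rfl

lemma transGen_iter {f : V → Option V} {a b : V} (h : Relation.TransGen (fwd f) a b) :
    ∃ m, 1 ≤ m ∧ fIter f m a = some b := by
  induction h with
  | single h => exact ⟨1, le_rfl, by simpa [fIter, fwd] using h⟩
  | tail hab h ih =>
    obtain ⟨m, hm, hiter⟩ := ih
    exact ⟨m + 1, by omega, by rw [show fIter f (m+1) a = (fIter f m a).bind f from rfl, hiter]; exact h⟩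

lemma det_one_sub_stepMat_of_cycle {f : V → Option V} {v : V}
    (hv : Relation.TransGen (fwd f) v v) :
    ((1 : Matrix V V R) - stepMat f).det = 0 := by
  have hex : ∃ m, 1 ≤ m ∧ fIter f m v = some v := transGen_iter hv
  set m := Nat.find hex with hmdef
  obtain ⟨hm1, hmv⟩ := Nat.find_spec hex
  rw [← hmdef] at hm1 hmv
  set vd : ℕ → V := fun k => (fIter f k v).getD v with hvd
  have hsome : ∀ k ≤ m, fIter f k v = some (vd k) := by
    intro k hk
    have hsplit : fIter f m v = (fIter f k v).bind (fIter f (m - k)) := by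
      rw [← fIter_add]; congr 1; omega
    cases h : fIter f k v with
    | none => rw [h] at hsplit; rw [hsplit] at hmv; simp at hmv
    | some u =>
      have hval : vd k = u := by
        have hrfl : vd k = (fIter f k v).getD v := rfl
        rw [hrfl, h]; rfl
      rw [hval]
  have hstep : ∀ k < m, f (vd k) = some (vd (k + 1)) := by
    intro k hk
    have h1 : fIter f (k+1) v = some (vd (k+1)) := hsome _ (by omega)
    have h2 : fIter f (k+1) v = (fIter f k v).bind f := rfl
    rw [hsome k (by omega)] at h2
    simp only [Option.bind_some] at h2
    rw [← h2]; exact h1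
  have hinjlt : ∀ i j, i < j → j < m → vd i ≠ vd j := by
    intro i j hij hjm heq
    have hw : fIter f (i + (m - j)) v = some v := by
      rw [fIter_add, hsome i (by omega), Option.bind_some, heq,
        show fIter f (m-j) (vd j) = (some (vd j)).bind (fIter f (m-j)) from (Option.bind_some _ _).symm,
        ← hsome j (by omega), ← fIter_add, show j + (m - j) = m by omega]
      exact hmv
    exact Nat.find_min hex (by omega : i + (m - j) < m) ⟨by omega, hw⟩
  have hinj : ∀ i < m, ∀ j < m, vd i = vd j → i = j := by
    intro i hi j hj heq
    rcases lt_trichotomy i j with h | h | h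
    · exact absurd heq (hinjlt i j h hj)
    · exact h
    · exact absurd heq.symm (hinjlt j i h hi)
  set O : Finset V := (range m).image vd with hO
  have hvmem : v ∈ O := mem_image.2 ⟨0, mem_range.2 (by omega), by simp [hvd, fIter]⟩
  have hv0 : vd 0 = v := by simp [hvd, fIter]
  have hvm : vd m = v := by simp [hvd, hmv]
  set B : Matrix V V R := (1 : Matrix V V R) - stepMat f with hB
  have hrow : ∀ q, (∑ p ∈ O, B p q) = 0 := by
    intro q
    rw [hO, sum_image (fun i hi j hj hij => hinj i (mem_range.1 hi) j (mem_range.1 hj) hij)]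
    have hent : ∀ k ∈ range m, B (vd k) q
        = (if vd k = q then (1:R) else 0) - (if vd (k+1) = q then 1 else 0) := by
      intro k hk
      simp [hB, Matrix.sub_apply, Matrix.one_apply, stepMat, hstep k (mem_range.1 hk)]
    rw [sum_congr rfl hent, sum_sub_distrib]
    have e3 : ∑ k ∈ range m, (if vd k = q then (1:R) else 0)
        = ∑ k ∈ range m, (if vd (k+1) = q then (1:R) else 0) := by
      have e1 := Finset.sum_range_succ' (fun k => if vd k = q then (1:R) else 0) m
      have e2 := Finset.sum_range_succ (fun k => if vd k = q then (1:R) else 0) m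
      rw [e2] at e1
      simp only [hvm, ← hv0] at e1
      exact add_right_cancel e1
    rw [e3, sub_self]
  have hcomb : (∑ k : V, (if k ∈ O then (1:R) else 0) • B k) = 0 := by
    rw [show (∑ k : V, (if k ∈ O then (1:R) else 0) • B k)
        = ∑ k ∈ univ.filter (fun k => k ∈ O), B k from by
      rw [sum_filter (p := fun k => k ∈ O) (f := fun k => B k)]; exact sum_congr rfl fun k _ => by split_ifs <;> simp]
    rw [filter_mem_eq_inter, univ_inter]
    funext q
    rw [Finset.sum_apply (g := fun k => B k)]
    exact hrow q
  have hdet := Matrix.det_updateRow_sum B v (fun k => if k ∈ O then (1:R) else 0)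
  rw [hcomb] at hdet
  have hz : (B.updateRow v 0).det = 0 :=
    Matrix.det_eq_zero_of_row_eq_zero v (by simp)
  rw [hz, if_pos hvmem, one_smul] at hdet
  rw [hB] at hdet
  exact hdet.symm

lemma det_one_sub_stepMat_of_acyclic {f : V → Option V}
    (hf : ∀ v, ¬ Relation.TransGen (fwd f) v v) :
    ((1 : Matrix V V R) - stepMat f).det = 1 := by
  set B : Matrix V V R := (1 : Matrix V V R) - stepMat f with hB
  set reach : V → Finset V := fun p => univ.filter (fun u => Relation.ReflTransGen (fwd f) p u)
    with hreach
  set bfun : V → ℤ := fun p => -((reach p).card : ℤ) with hbfun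
  have hlt : ∀ p q, f p = some q → bfun p < bfun q := by
    intro p q hpq
    have hsub : reach q ⊆ reach p := by
      intro u hu
      simp only [hreach, mem_filter, mem_univ, true_and] at hu ⊢
      exact Relation.ReflTransGen.head hpq hu
    have hp : p ∈ reach p := by
      simp only [hreach, mem_filter, mem_univ, true_and]
      exact Relation.ReflTransGen.refl
    have hnp : p ∉ reach q := by
      simp only [hreach, mem_filter, mem_univ, true_and]
      intro h
      exact hf p (Relation.TransGen.head' hpq h)
    have hcard : (reach q).card < (reach p).card :=
      card_lt_card ⟨hsub, fun hc => hnp (hc hp)⟩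
    simp only [hbfun]
    omega
  have hbt : B.BlockTriangular bfun := by
    intro i j hij
    have hne : i ≠ j := fun h => absurd hij (by rw [h]; exact lt_irrefl _)
    have hfi : f i ≠ some j := fun h => absurd hij (not_lt_of_gt (hlt _ _ h))
    simp [hB, Matrix.sub_apply, Matrix.one_apply, stepMat, hne, hfi]
  rw [hbt.det]
  have hblock : ∀ a : ℤ, B.toSquareBlock bfun a = 1 := by
    intro a
    ext ⟨i, hi⟩ ⟨j, hj⟩
    by_cases hij : i = j
    · subst hij
      have hfi : f i ≠ some i := fun h => hf i (Relation.TransGen.single h)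
      simp [Matrix.toSquareBlock_def, hB, Matrix.sub_apply, Matrix.one_apply, stepMat, hfi]
    · have hfi : f i ≠ some j := by
        intro h
        have := hlt _ _ h
        rw [hi, hj] at this
        exact lt_irrefl _ this
      have hne : (⟨i, hi⟩ : {k // bfun k = a}) ≠ ⟨j, hj⟩ := by
        simp [Subtype.ext_iff, hij]
      simp [Matrix.toSquareBlock_def, hB, Matrix.sub_apply, Matrix.one_apply, stepMat, hij, hfi,
        Matrix.one_apply_ne hne]
  rw [Finset.prod_congr rfl (fun a _ => by rw [hblock a, Matrix.det_one])]
  simp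

theorem det_one_sub_stepMat (f : V → Option V) :
    ((1 : Matrix V V R) - stepMat f).det
      = if ∀ v, ¬ Relation.TransGen (fwd f) v v then 1 else 0 := by
  split_ifs with h
  · exact det_one_sub_stepMat_of_acyclic h
  · push_neg at h
    obtain ⟨v, hv⟩ := h
    exact det_one_sub_stepMat_of_cycle hv

noncomputable def lapMat (A : V → V → Prop) (wgt : V → V → R) (t : R) : Matrix V V R :=
  Matrix.of fun p q =>
    (if p = q then t + ∑ q' ∈ univ.filter (fun q' => A p q'), wgt p q' else 0)
      - (if A p q then wgt p q else 0)

noncomputable def erow (p : V) : V → R := fun q => if p = q then 1 else 0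

theorem det_lapMat (A : V → V → Prop) (wgt : V → V → R) (t : R) :
    (lapMat A wgt t).det = forestEnum A wgt t := by
  set C : V → Finset (Option V) :=
    fun p => insert none ((univ.filter (fun q => A p q)).image some) with hC
  set vec : ∀ _ : V, Option V → (V → R) := fun p o =>
    o.elim (t • erow p) (fun q' => wgt p q' • (erow p - erow q')) with hvecdef
  have hrow : ∀ p : V, lapMat A wgt t p = ∑ o ∈ C p, vec p o := by
    intro p
    funext q
    have hnone : (none : Option V) ∉ (univ.filter (fun q => A p q)).image some := by simp
    rw [hC]
    simp only
    rw [Finset.sum_apply, Finset.sum_insert hnone,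
      Finset.sum_image (fun a _ b _ h => Option.some_inj.1 h)]
    have hlast : ∑ q' ∈ univ.filter (fun q' => A p q'), (vec p (some q')) q
        = (∑ q' ∈ univ.filter (fun q' => A p q'), wgt p q' * erow p q)
          - (if A p q then wgt p q else 0) := by
      have e1 : ∀ q' ∈ univ.filter (fun q' => A p q'),
          vec p (some q') q = wgt p q' * erow p q - wgt p q' * erow q' q := by
        intro q' _
        show wgt p q' * (erow p q - erow q' q) = wgt p q' * erow p q - wgt p q' * erow q' q
        ring
      rw [Finset.sum_congr rfl e1, Finset.sum_sub_distrib]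
      congr 1
      have hpt : ∀ q' : V, wgt p q' * erow q' q = if q' = q then wgt p q' else 0 := by
        intro q'
        simp only [erow]
        split_ifs <;> ring
      rw [Finset.sum_congr rfl fun q' _ => hpt q',
        Finset.sum_ite_eq' (univ.filter (fun q' => A p q')) q (fun q' => wgt p q')]
      simp [Finset.mem_filter]
    rw [hlast]
    show lapMat A wgt t p q = (t • erow p) q + _
    simp only [lapMat, Matrix.of_apply, Pi.smul_apply, smul_eq_mul, erow, ← Finset.sum_mul]
    by_cases hpq : p = q
    · subst hpq
      simp
      ring
    · rw [if_neg hpq, if_neg (fun h : p = q => hpq h)]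
      ring
  set coef : ∀ _ : V, Option V → R := fun p o => o.elim t (wgt p) with hcoef
  set base : ∀ _ : V, Option V → (V → R) := fun p o =>
    o.elim (erow p) (fun q' => erow p - erow q') with hbase
  have hdet1 : (lapMat A wgt t).det
      = ∑ r ∈ Fintype.piFinset C, (∏ p : V, coef p (r p)) •
          ((1 : Matrix V V R) - stepMat r).det := by
    have h0 : (lapMat A wgt t).det
        = Matrix.detRowAlternating.toMultilinearMap (fun p => ∑ o ∈ C p, vec p o) := by
      rw [show (fun p => ∑ o ∈ C p, vec p o) = fun p => lapMat A wgt t p from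
        funext fun p => (hrow p).symm]
      rfl
    rw [h0, MultilinearMap.map_sum_finset]
    refine Finset.sum_congr rfl fun r hr => ?_
    have h1 : (fun p => vec p (r p)) = fun p => coef p (r p) • base p (r p) := by
      funext p
      cases r p <;> rfl
    rw [h1, MultilinearMap.map_smul_univ]
    congr 1
    have h2 : ((1 : Matrix V V R) - stepMat r) = Matrix.of (fun p => base p (r p) : V → V → R) := by
      ext p q
      rw [Matrix.sub_apply, Matrix.of_apply]
      cases hrp : r p with
      | none =>
        show (1 : Matrix V V R) p q - stepMat r p q = erow p q
        simp [Matrix.one_apply, stepMat, hrp, erow]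
      | some q' =>
        show (1 : Matrix V V R) p q - stepMat r p q = erow p q - erow q' q
        simp only [Matrix.one_apply, stepMat, Matrix.of_apply, hrp, erow]
        congr 1
        exact if_congr (by simp [eq_comm]) rfl rfl
    rw [h2]
    rfl
  rw [hdet1]
  have hstep2 : ∀ r ∈ Fintype.piFinset C,
      (∏ p : V, coef p (r p)) • ((1 : Matrix V V R) - stepMat r).det
      = if (∀ v, ¬ Relation.TransGen (fwd r) v v) then ∏ p : V, coef p (r p) else 0 := by
    intro r hr
    rw [det_one_sub_stepMat]
    split_ifs <;> simp
  rw [Finset.sum_congr rfl hstep2, Finset.sum_ite, Finset.sum_const_zero, add_zero]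
  have hsets : (Fintype.piFinset C).filter
      (fun r : V → Option V => ∀ v, ¬ Relation.TransGen (fwd r) v v)
      = Finset.univ.filter (fun f : V → Option V => IsRootedForest A f) := by
    ext r
    rw [Finset.mem_filter, Finset.mem_filter]
    simp only [Finset.mem_filter, Fintype.mem_piFinset, Finset.mem_univ, true_and,
      IsRootedForest, fwd]
    constructor
    · rintro ⟨h1, h2⟩
      refine ⟨fun p q hq => ?_, h2⟩
      have hm := h1 p
      rw [hC] at hm
      simp only at hm
      rcases Finset.mem_insert.1 hm with h | h
      · rw [hq] at h
        exact absurd h (by simp)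
      · obtain ⟨q', hq', heq⟩ := Finset.mem_image.1 h
        rw [hq] at heq
        obtain rfl : q' = q := Option.some_inj.1 heq
        exact (Finset.mem_filter.1 hq').2
    · rintro ⟨h1, h2⟩
      refine ⟨fun p => ?_, h2⟩
      rw [hC]
      simp only
      cases hrp : r p with
      | none => exact Finset.mem_insert_self _ _
      | some q =>
        exact Finset.mem_insert_of_mem (Finset.mem_image.2
          ⟨q, Finset.mem_filter.2 ⟨Finset.mem_univ _, h1 p q hrp⟩, rfl⟩)
  rw [hsets]
  rw [forestEnum]
  refine Finset.sum_congr (Finset.ext fun r => ?_)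
    (fun r _ => Finset.prod_congr rfl fun p _ => by rw [hcoef])
  simp only [Finset.mem_filter, Finset.mem_univ, true_and]

lemma det_fromBlocks_of_sum_eq {U : Type*} [Fintype U] [DecidableEq U]
    (a b c d : Matrix U U R) (h : a + b = c + d) :
    (Matrix.fromBlocks a b c d).det = (a - c).det * (c + d).det := by
  have e11 : (1 : Matrix U U R) * a + (-1) * c = a - c := by
    rw [Matrix.one_mul, Matrix.neg_mul, Matrix.one_mul, ← sub_eq_add_neg]
  have e12 : (1 : Matrix U U R) * b + (-1) * d = b - d := by
    rw [Matrix.one_mul, Matrix.neg_mul, Matrix.one_mul, ← sub_eq_add_neg]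
  have e21 : (0 : Matrix U U R) * a + 1 * c = c := by
    rw [Matrix.zero_mul, Matrix.one_mul, zero_add]
  have e22 : (0 : Matrix U U R) * b + 1 * d = d := by
    rw [Matrix.zero_mul, Matrix.one_mul, zero_add]
  have h1 : Matrix.fromBlocks (1 : Matrix U U R) (-1 : Matrix U U R) (0 : Matrix U U R) (1 : Matrix U U R) * Matrix.fromBlocks a b c d
      = Matrix.fromBlocks (a - c) (b - d) c d := by
    rw [Matrix.fromBlocks_multiply, e11, e12, e21, e22]
  have f11 : (a - c) * 1 + (b - d) * 0 = a - c := by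
    rw [Matrix.mul_one, Matrix.mul_zero, add_zero]
  have f12 : (a - c) * 1 + (b - d) * 1 = 0 := by
    rw [Matrix.mul_one, Matrix.mul_one]
    have : a - c + (b - d) = a + b - (c + d) := by abel
    rw [this, h, sub_self]
  have f21 : c * 1 + d * 0 = c := by rw [Matrix.mul_one, Matrix.mul_zero, add_zero]
  have f22 : c * 1 + d * 1 = c + d := by rw [Matrix.mul_one, Matrix.mul_one]
  have h2 : Matrix.fromBlocks (a - c) (b - d) c d * Matrix.fromBlocks (1 : Matrix U U R) (1 : Matrix U U R) (0 : Matrix U U R) (1 : Matrix U U R)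
      = Matrix.fromBlocks (a - c) 0 c (c + d) := by
    rw [Matrix.fromBlocks_multiply, f11, f12, f21, f22]
  have hdL : (Matrix.fromBlocks (1 : Matrix U U R) (-1 : Matrix U U R) (0 : Matrix U U R) (1 : Matrix U U R)).det = 1 := by
    rw [Matrix.det_fromBlocks_zero₂₁, Matrix.det_one, one_mul]
  have hdR : (Matrix.fromBlocks (1 : Matrix U U R) (1 : Matrix U U R) (0 : Matrix U U R) (1 : Matrix U U R)).det = 1 := by
    rw [Matrix.det_fromBlocks_zero₂₁, Matrix.det_one, one_mul]
  calc (Matrix.fromBlocks a b c d).det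
      = ((Matrix.fromBlocks (1 : Matrix U U R) (-1 : Matrix U U R) (0 : Matrix U U R) (1 : Matrix U U R) * Matrix.fromBlocks a b c d)
          * Matrix.fromBlocks (1 : Matrix U U R) (1 : Matrix U U R) (0 : Matrix U U R) (1 : Matrix U U R)).det := by
        rw [Matrix.det_mul, Matrix.det_mul, hdL, hdR, one_mul, mul_one]
    _ = (Matrix.fromBlocks (a - c) 0 c (c + d)).det := by rw [h1, h2]
    _ = (a - c).det * (c + d).det := Matrix.det_fromBlocks_zero₁₂ _ _ _

section Strong

variable {U : Type*} [Fintype U] [DecidableEq U] (A : U → U → Prop) (w w' : U → U → R)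

lemma strong_deg (hA : ∀ u : U, ¬ A u u) (y0 y1 : R) (u : U) (ε : Bool) :
    ∑ q' ∈ univ.filter (fun q' => strongArc A (u, ε) q'), strongWeight w w' y0 y1 (u, ε) q'
      = (if ε then y0 else y1) + ∑ z : U, (if A u z then w u z + w' u z else 0) := by
  rw [Finset.sum_filter, Fintype.sum_prod_type]
  have hpt : ∀ z : U,
      (∑ δ : Bool, if strongArc A (u, ε) (z, δ) then strongWeight w w' y0 y1 (u, ε) (z, δ) else 0)
      = (if A u z then w u z + w' u z else 0) + (if z = u then (if ε then y0 else y1) else 0) := by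
    intro z
    rw [Fintype.sum_bool]
    by_cases hz : z = u
    · subst hz
      cases ε <;> simp [strongArc, strongWeight, hA z]
    · have hz' : u ≠ z := fun h => hz h.symm
      by_cases ha : A u z
      · cases ε <;> simp [strongArc, strongWeight, hz, hz', ha] <;> ring
      · cases ε <;> simp [strongArc, strongWeight, hz, hz', ha]
  rw [Finset.sum_congr rfl fun z _ => hpt z, Finset.sum_add_distrib,
    Finset.sum_ite_eq' univ u (fun _ => if ε then y0 else y1)]
  simp [add_comm]

lemma lap_strong_apply (hA : ∀ u : U, ¬ A u u) (y0 y1 t : R) (u v : U) (ε δ : Bool) :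
    lapMat (strongArc A) (strongWeight w w' y0 y1) t (u, ε) (v, δ)
      = (if (u, ε) = (v, δ) then
           t + ((if ε then y0 else y1) + ∑ z : U, (if A u z then w u z + w' u z else 0)) else 0)
        - (if u = v then (if ε = δ then 0 else (if δ then y1 else y0))
           else (if A u v then (if ε = δ then w u v else w' u v) else 0)) := by
  have harc : (if strongArc A (u, ε) (v, δ) then strongWeight w w' y0 y1 (u, ε) (v, δ) else 0)
      = (if u = v then (if ε = δ then 0 else (if δ then y1 else y0))
         else (if A u v then (if ε = δ then w u v else w' u v) else 0)) := by
    by_cases hz : u = v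
    · subst hz
      cases ε <;> cases δ <;> simp [strongArc, strongWeight, hA u]
    · by_cases ha : A u v
      · cases ε <;> cases δ <;> simp [strongArc, strongWeight, hz, ha]
      · cases ε <;> cases δ <;> simp [strongArc, strongWeight, hz, ha]
  show (if (u, ε) = (v, δ) then
      t + ∑ q' ∈ univ.filter (fun q' => strongArc A (u, ε) q'),
        strongWeight w w' y0 y1 (u, ε) q' else 0)
      - (if strongArc A (u, ε) (v, δ) then strongWeight w w' y0 y1 (u, ε) (v, δ) else 0) = _
  rw [harc, strong_deg A w w' hA y0 y1 u ε]

end Strong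

end SpinAux

/-- The forest enumerator of `H = G ⊠ K₂` depends on the vertical-arc weights
`x₀, x₁` only through their sum: `F_H(t; x₀, x₁) = F_H(t; x₀ + x₁, 0)`. -/
theorem strong_product_spin_weight_transfer {R : Type*} [CommRing R]
    {U : Type*} [Fintype U] (A : U → U → Prop) (hA : ∀ u : U, ¬ A u u)
    (w w' : U → U → R) (x0 x1 t : R) :
    forestEnum (strongArc A) (strongWeight w w' x0 x1) t =
      forestEnum (strongArc A) (strongWeight w w' (x0 + x1) 0) t := by
  classical
  rw [← SpinAux.det_lapMat, ← SpinAux.det_lapMat]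
  set M1 := SpinAux.lapMat (strongArc A) (strongWeight w w' x0 x1) t with hM1
  set M2 := SpinAux.lapMat (strongArc A) (strongWeight w w' (x0 + x1) 0) t with hM2
  let e : (U ⊕ U) ≃ (U × Bool) :=
    { toFun := Sum.elim (fun u => (u, false)) (fun u => (u, true))
      invFun := fun p => if p.2 then Sum.inr p.1 else Sum.inl p.1
      left_inv := by rintro (u | u) <;> rfl
      right_inv := by rintro ⟨u, _ | _⟩ <;> rfl }
  rw [← Matrix.det_submatrix_equiv_self e M1, ← Matrix.det_submatrix_equiv_self e M2]
  have hblk : ∀ N : Matrix (U × Bool) (U × Bool) R, N.submatrix ⇑e ⇑e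
      = Matrix.fromBlocks
        (Matrix.of fun u v => N (u, false) (v, false))
        (Matrix.of fun u v => N (u, false) (v, true))
        (Matrix.of fun u v => N (u, true) (v, false))
        (Matrix.of fun u v => N (u, true) (v, true)) := by
    intro N
    ext i j
    rcases i with i | i <;> rcases j with j | j <;> rfl
  rw [hblk M1, hblk M2]
  have hE1 := fun (u v : U) (ε δ : Bool) =>
    SpinAux.lap_strong_apply A w w' hA x0 x1 t u v ε δ
  have hE2 := fun (u v : U) (ε δ : Bool) =>
    SpinAux.lap_strong_apply A w w' hA (x0 + x1) 0 t u v ε δ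
  have hs1 : (Matrix.of fun u v => M1 (u, false) (v, false))
        + (Matrix.of fun u v => M1 (u, false) (v, true))
      = (Matrix.of fun u v => M1 (u, true) (v, false))
        + (Matrix.of fun u v => M1 (u, true) (v, true)) := by
    ext u v
    simp only [Matrix.add_apply, Matrix.of_apply, hM1, hE1]
    by_cases huv : u = v
    · subst huv
      simp [Prod.ext_iff]
      ring
    · simp [Prod.ext_iff, huv]
      try ring
  have hs2 : (Matrix.of fun u v => M2 (u, false) (v, false))
        + (Matrix.of fun u v => M2 (u, false) (v, true))
      = (Matrix.of fun u v => M2 (u, true) (v, false))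
        + (Matrix.of fun u v => M2 (u, true) (v, true)) := by
    ext u v
    simp only [Matrix.add_apply, Matrix.of_apply, hM2, hE2]
    by_cases huv : u = v
    · subst huv
      simp [Prod.ext_iff]
      ring
    · simp [Prod.ext_iff, huv]
      try ring
  have hac : (Matrix.of fun u v => M1 (u, false) (v, false))
        - (Matrix.of fun u v => M1 (u, true) (v, false))
      = (Matrix.of fun u v => M2 (u, false) (v, false))
        - (Matrix.of fun u v => M2 (u, true) (v, false)) := by
    ext u v
    simp only [Matrix.sub_apply, Matrix.of_apply, hM1, hM2, hE1, hE2]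
    by_cases huv : u = v
    · subst huv
      simp [Prod.ext_iff]
      ring
    · simp [Prod.ext_iff, huv]
      try ring
  have hcd : (Matrix.of fun u v => M1 (u, true) (v, false))
        + (Matrix.of fun u v => M1 (u, true) (v, true))
      = (Matrix.of fun u v => M2 (u, true) (v, false))
        + (Matrix.of fun u v => M2 (u, true) (v, true)) := by
    ext u v
    simp only [Matrix.add_apply, Matrix.of_apply, hM1, hM2, hE1, hE2]
    by_cases huv : u = v
    · subst huv
      simp [Prod.ext_iff]
      ring
    · simp [Prod.ext_iff, huv]
      try ring
  rw [SpinAux.det_fromBlocks_of_sum_eq _ _ _ _ hs1,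
    SpinAux.det_fromBlocks_of_sum_eq _ _ _ _ hs2, hac, hcd]
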